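/- If (a, b) is a nontrivial primitive solution of x^2 + 7^{2k+1} = y^n with n an odd prime, y = b even, b not a power of 2, and n ≥ 11, and if the mod-n Galois representation of the Frey curve E₁: Y^2 + XY = X^3 + ((a-1)/4)X^2 + (b^n/64)X (with a ≡ 1 mod 4) arises from the unique rational newform of level 14, then 3 does not divide a. -/
import Mathlib


open Finset in
/-- The trace of Frobenius at `3` of the Frey curve
`E₁ : Y² + XY = X³ + cX² + dX` (with `c = (a-1)/4`, `d = bⁿ/64`), computed as
`a₃(E₁) = 3 + 1 - #E₁(𝔽₃) = 3 - #{affine points of E₁ over 𝔽₃}`. -/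
def freyTraceAt3 (c d : ℤ) : ℤ :=
  3 - ((univ.filter fun p : ZMod 3 × ZMod 3 =>
    p.2 ^ 2 + p.1 * p.2 =
      p.1 ^ 3 + (c : ZMod 3) * p.1 ^ 2 + (d : ZMod 3) * p.1).card : ℤ)

/-- If `(a,b)` is a nontrivial primitive solution of `x² + 7^(2k+1) = yⁿ` with `n ≥ 11` an
odd prime, `b` even and not a power of `2`, `a ≡ 1 (mod 4)`, and the mod-`n` Galois
representation of the Frey curve `E₁ : Y² + XY = X³ + ((a-1)/4)X² + (bⁿ/64)X` arises from
the unique rational newform `f₁` of level `14` (which has `a₃(f₁) = -2`; by the standard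
level-lowering congruences this means `a₃(E₁) ≡ -2 (mod n)` or
`(3+1)² ≡ a₃(f₁)² (mod n)`), then `3 ∤ a`. -/
theorem stmt_17 (a b c d : ℤ) (k n : ℕ) (hn : n.Prime) (hodd : Odd n) (h11 : 11 ≤ n)
    (hcop : IsCoprime a b) (ha0 : a ≠ 0) (hbe : Even b)
    (hbpow : ∀ m : ℕ, b.natAbs ≠ 2 ^ m)
    (ha1 : a % 4 = 1)
    (heq : a ^ 2 + 7 ^ (2 * k + 1) = b ^ n)
    (hc : 4 * c = a - 1) (hd : 64 * d = b ^ n)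
    (hlevel14 : (n : ℤ) ∣ (freyTraceAt3 c d - (-2)) ∨
      (n : ℤ) ∣ ((3 + 1) ^ 2 - (-2 : ℤ) ^ 2)) :
    ¬ (3 : ℤ) ∣ a := by
  intro h3
  have ha : (a : ZMod 3) = 0 := by
    exact_mod_cast (ZMod.intCast_zmod_eq_zero_iff_dvd a 3).2 h3
  have hc3 : (c : ZMod 3) = 2 := by
    have h1 := congrArg (Int.cast : ℤ → ZMod 3) hc
    push_cast at h1
    rw [ha] at h1
    have h4 : (4 : ZMod 3) = 1 := by decide
    rw [h4, one_mul] at h1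
    rw [h1]; decide
  have hd3 : (d : ZMod 3) = 1 := by
    have h1 := congrArg (Int.cast : ℤ → ZMod 3) hd
    have h2 := congrArg (Int.cast : ℤ → ZMod 3) heq
    push_cast at h1 h2
    rw [ha] at h2
    have h7 : (7 : ZMod 3) = 1 := by decide
    rw [h7, one_pow] at h2
    have h64 : (64 : ZMod 3) = 1 := by decide
    rw [h64, one_mul] at h1
    rw [h1, ← h2]; decide
  have htr : freyTraceAt3 c d = 0 := by
    unfold freyTraceAt3
    simp only [hc3, hd3]
    decide
  rw [htr] at hlevel14
  rcases hlevel14 with h | h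
  · have hle : (n : ℤ) ≤ 2 := Int.le_of_dvd (by norm_num) (by simpa using h)
    omega
  · have h12 : (n : ℤ) ∣ 12 := by simpa using h
    have hdvd : n ∣ 12 := by exact_mod_cast h12
    have hle : n ≤ 12 := Nat.le_of_dvd (by norm_num) hdvd
    interval_cases n
    · exact absurd hdvd (by decide)
    · exact absurd hn (by decide)
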